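/- Define α ⪯ β (α is weaker than β) for ordinals α, β < ω^ω to mean every Cantor coefficient of α is at most the corresponding Cantor coefficient of β. Then α ⪯ β if and only if there exists an ordinal γ with α ⨣ γ = β. -/

import Mathlib

universe u

namespace Ordinal

/-- Natural (Hessenberg) addition on ordinals, as formerly in Mathlib
(`Mathlib.SetTheory.Ordinal.NaturalOps`, since removed). -/
noncomputable def nadd (a b : Ordinal.{u}) : Ordinal.{u} :=
  max (blsub.{u, u} a fun a' _ => nadd a' b) (blsub.{u, u} b fun b' _ => nadd a b')
termination_by (a, b)

end Ordinal

namespace NaturalOps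

scoped infixl:65 " ♯ " => Ordinal.nadd

end NaturalOps

open Ordinal NaturalOps

/-- The ordinal `ω^d * a_d + ... + ω * a_1 + a_0`, i.e. the ordinal below `ω^ω` with
Cantor normal form given by the natural-number coefficients `a 0, ..., a d`. -/
noncomputable def cnf (d : ℕ) (a : ℕ → ℕ) : Ordinal :=
  ((List.range (d + 1)).reverse.map (fun i => ω ^ i * (a i : Ordinal))).sum

/-- `α` is weaker than `β`: every Cantor coefficient of `α` is at most the
corresponding Cantor coefficient of `β`. -/
def Weaker (α β : Ordinal) : Prop :=
  ∃ (d : ℕ) (a b : ℕ → ℕ), α = cnf d a ∧ β = cnf d b ∧ ∀ i, a i ≤ b i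


namespace Ordinal

theorem lt_nadd_iff {a b c : Ordinal.{u}} :
    a < b ♯ c ↔ (∃ b' < b, a ≤ b' ♯ c) ∨ ∃ c' < c, a ≤ b ♯ c' := by
  rw [nadd]
  simp [Ordinal.lt_blsub_iff]

theorem nadd_le_iff {a b c : Ordinal.{u}} :
    b ♯ c ≤ a ↔ (∀ b' < b, b' ♯ c < a) ∧ ∀ c' < c, b ♯ c' < a := by
  rw [nadd]
  simp [Ordinal.blsub_le_iff]

theorem nadd_lt_nadd_left {b c : Ordinal.{u}} (h : b < c) (a : Ordinal.{u}) : a ♯ b < a ♯ c :=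
  lt_nadd_iff.2 (Or.inr ⟨b, h, le_rfl⟩)

theorem nadd_lt_nadd_right {b c : Ordinal.{u}} (h : b < c) (a : Ordinal.{u}) : b ♯ a < c ♯ a :=
  lt_nadd_iff.2 (Or.inl ⟨b, h, le_rfl⟩)

theorem nadd_le_nadd_left {b c : Ordinal.{u}} (h : b ≤ c) (a : Ordinal.{u}) : a ♯ b ≤ a ♯ c := by
  rcases lt_or_eq_of_le h with (h | rfl)
  · exact (nadd_lt_nadd_left h a).le
  · exact le_rfl

theorem nadd_le_nadd_right {b c : Ordinal.{u}} (h : b ≤ c) (a : Ordinal.{u}) : b ♯ a ≤ c ♯ a := by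
  rcases lt_or_eq_of_le h with (h | rfl)
  · exact (nadd_lt_nadd_right h a).le
  · exact le_rfl

theorem nadd_lt_nadd_of_lt_of_le {a b c d : Ordinal.{u}} (h1 : a < b) (h2 : c ≤ d) :
    a ♯ c < b ♯ d :=
  (nadd_lt_nadd_right h1 c).trans_le (nadd_le_nadd_left h2 b)

theorem nadd_lt_nadd_of_le_of_lt {a b c d : Ordinal.{u}} (h1 : a ≤ b) (h2 : c < d) :
    a ♯ c < b ♯ d :=
  (nadd_le_nadd_right h1 c).trans_lt (nadd_lt_nadd_left h2 b)

theorem nadd_zero (a : Ordinal.{u}) : a ♯ 0 = a := by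
  induction a using Ordinal.induction with
  | _ a IH =>
  rw [nadd, blsub_zero, max_zero_right]
  convert blsub_id a
  rename_i hb
  exact IH _ hb

theorem zero_nadd (a : Ordinal.{u}) : 0 ♯ a = a := by
  induction a using Ordinal.induction with
  | _ a IH =>
  rw [nadd, blsub_zero, max_zero_left]
  convert blsub_id a
  rename_i hb
  exact IH _ hb

theorem nadd_succ (a : Ordinal.{u}) : ∀ b : Ordinal.{u}, a ♯ Order.succ b = Order.succ (a ♯ b) := by
  induction a using Ordinal.induction with
  | _ a IH =>
  intro b
  apply le_antisymm
  · rw [nadd_le_iff]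
    constructor
    · intro a' ha'
      rw [IH a' ha', Order.succ_lt_succ_iff]
      exact nadd_lt_nadd_right ha' b
    · intro c hc
      exact Order.lt_succ_iff.2 (nadd_le_nadd_left (Order.lt_succ_iff.1 hc) a)
  · exact Order.succ_le_of_lt (nadd_lt_nadd_left (Order.lt_succ b) a)

theorem nadd_nat (a : Ordinal.{u}) (n : ℕ) : a ♯ n = a + n := by
  induction n with
  | zero => rw [Nat.cast_zero, nadd_zero, add_zero]
  | succ n hn =>
    rw [Nat.cast_succ, ← add_assoc, ← hn, add_one_eq_succ, add_one_eq_succ, nadd_succ]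

theorem le_nadd_self {a b : Ordinal.{u}} : a ≤ b ♯ a := by
  have := nadd_le_nadd_right (zero_le : (0 : Ordinal.{u}) ≤ b) a
  rwa [zero_nadd] at this

end Ordinal


theorem decomp (e : Ordinal) (m : ℕ) (x u : Ordinal) (hx : x < ω ^ e) (hu : u < ω ^ e * m + x) :
    ∃ (k : ℕ) (r : Ordinal), r < ω ^ e ∧ u = ω ^ e * k + r ∧ (k < m ∨ (k = m ∧ r < x)) := by
  have hb : (0:Ordinal) < ω ^ e := opow_pos _ omega0_pos
  have hu' : u < ω ^ e * (m + 1 : ℕ) := by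
    refine hu.trans_le ?_
    rw [Nat.cast_add, Nat.cast_one, mul_add, mul_one]
    exact add_le_add_right hx.le _
  have hk : u / ω ^ e < ((m+1 : ℕ) : Ordinal) := (Ordinal.div_lt hb.ne').2 hu'
  obtain ⟨k, hkeq⟩ := lt_omega0.1 (hk.trans (nat_lt_omega0 _))
  have hkm : k ≤ m := by
    rw [hkeq] at hk
    exact_mod_cast Nat.lt_succ_iff.1 (by exact_mod_cast hk)
  have hmod : u % ω ^ e < ω ^ e := Ordinal.mod_lt u hb.ne'
  have hdm : ω ^ e * k + u % ω ^ e = u := by rw [← hkeq]; exact Ordinal.div_add_mod u _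
  refine ⟨k, u % ω ^ e, hmod, hdm.symm, ?_⟩
  rcases lt_or_eq_of_le hkm with h | h
  · exact Or.inl h
  · subst h
    refine Or.inr ⟨rfl, ?_⟩
    rw [← hdm] at hu
    exact (add_lt_add_iff_left _).1 hu

theorem succ_cast_mul (e : Ordinal) (k : ℕ) :
    ω ^ e * (k : Ordinal) + ω ^ e = ω ^ e * ((k + 1 : ℕ) : Ordinal) := by
  push_cast
  rw [mul_add, mul_one]

theorem key (e : Ordinal) (hcl : ∀ x y, x < ω ^ e → y < ω ^ e → x ♯ y < ω ^ e) :
    ∀ δ (m n : ℕ) (x y : Ordinal), x < ω ^ e → y < ω ^ e →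
      (ω ^ e * m + x) ♯ (ω ^ e * n + y) = δ →
      (ω ^ e * m + x) ♯ (ω ^ e * n + y) = ω ^ e * ((m + n : ℕ) : Ordinal) + (x ♯ y) := by
  have hb : (0:Ordinal) < ω ^ e := opow_pos _ omega0_pos
  intro δ
  induction δ using Ordinal.induction with
  | _ δ IH =>
  intro m n x y hx hy hδ
  subst hδ
  apply le_antisymm
  · rw [nadd_le_iff]
    constructor
    · intro u hu
      obtain ⟨k, r, hr, rfl, hcase⟩ := decomp e m x u hx hu
      have hlt : (ω ^ e * k + r) ♯ (ω ^ e * n + y) < (ω ^ e * m + x) ♯ (ω ^ e * n + y) :=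
        nadd_lt_nadd_right hu _
      rw [IH _ hlt k n r y hr hy rfl]
      rcases hcase with h | ⟨rfl, h⟩
      · calc ω ^ e * ((k + n : ℕ) : Ordinal) + (r ♯ y)
            < ω ^ e * ((k + n : ℕ) : Ordinal) + ω ^ e := add_lt_add_right (hcl r y hr hy) _
          _ = ω ^ e * ((k + n + 1 : ℕ) : Ordinal) := succ_cast_mul e (k + n)
          _ ≤ ω ^ e * ((m + n : ℕ) : Ordinal) := by
              apply mul_le_mul_right
              exact_mod_cast Nat.succ_le_of_lt (by omega)
          _ ≤ ω ^ e * ((m + n : ℕ) : Ordinal) + (x ♯ y) := le_self_add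
      · exact add_lt_add_right (nadd_lt_nadd_right h _) _
    · intro v hv
      obtain ⟨k, r, hr, rfl, hcase⟩ := decomp e n y v hy hv
      have hlt : (ω ^ e * m + x) ♯ (ω ^ e * k + r) < (ω ^ e * m + x) ♯ (ω ^ e * n + y) :=
        nadd_lt_nadd_left hv _
      rw [IH _ hlt m k x r hx hr rfl]
      rcases hcase with h | ⟨rfl, h⟩
      · calc ω ^ e * ((m + k : ℕ) : Ordinal) + (x ♯ r)
            < ω ^ e * ((m + k : ℕ) : Ordinal) + ω ^ e := add_lt_add_right (hcl x r hx hr) _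
          _ = ω ^ e * ((m + k + 1 : ℕ) : Ordinal) := succ_cast_mul e (m + k)
          _ ≤ ω ^ e * ((m + n : ℕ) : Ordinal) := by
              apply mul_le_mul_right
              exact_mod_cast Nat.succ_le_of_lt (by omega)
          _ ≤ ω ^ e * ((m + n : ℕ) : Ordinal) + (x ♯ y) := le_self_add
      · exact add_lt_add_right (nadd_lt_nadd_left h _) _
  · by_contra hlt
    push_neg at hlt
    obtain ⟨k, r, hr, heq, hcase⟩ := decomp e (m + n) (x ♯ y) _ (hcl x y hx hy) hlt
    rcases hcase with h | ⟨rfl, h⟩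
    · rcases Nat.lt_or_ge k m with hk | hk
      · -- small := (ω^e*k + r) ♯ (ω^e*0 + 0)
        have hlt2 : (ω ^ e * (k:ℕ) + r) ♯ (ω ^ e * ((0:ℕ):Ordinal) + 0) <
            (ω ^ e * m + x) ♯ (ω ^ e * n + y) := by
          apply nadd_lt_nadd_of_lt_of_le
          · calc ω ^ e * (k : Ordinal) + r < ω ^ e * (k : Ordinal) + ω ^ e :=
                  add_lt_add_right hr _
              _ = ω ^ e * ((k + 1 : ℕ) : Ordinal) := succ_cast_mul e k
              _ ≤ ω ^ e * (m : Ordinal) := mul_le_mul_right (by exact_mod_cast hk) _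
              _ ≤ ω ^ e * m + x := le_self_add
          · simpa using zero_le (ω ^ e * (n:Ordinal) + y)
        have heq2 := IH _ hlt2 k 0 r 0 hr hb rfl
        rw [nadd_zero] at heq2
        simp only [Nat.add_zero] at heq2
        exact lt_irrefl _ (heq.trans_lt (heq2.symm.trans_lt hlt2))
      · -- k ≥ m, so k - m < n; small := (ω^e*m + 0) ♯ (ω^e*(k-m) + r)
        have hkm : k - m < n := by omega
        have hlt2 : (ω ^ e * (m:ℕ) + 0) ♯ (ω ^ e * ((k - m : ℕ):Ordinal) + r) <
            (ω ^ e * m + x) ♯ (ω ^ e * n + y) := by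
          apply nadd_lt_nadd_of_le_of_lt
          · exact add_le_add_right zero_le _
          · calc ω ^ e * ((k - m : ℕ) : Ordinal) + r
                < ω ^ e * ((k - m : ℕ) : Ordinal) + ω ^ e := add_lt_add_right hr _
              _ = ω ^ e * ((k - m + 1 : ℕ) : Ordinal) := succ_cast_mul e (k - m)
              _ ≤ ω ^ e * (n : Ordinal) := mul_le_mul_right (by exact_mod_cast hkm) _
              _ ≤ ω ^ e * n + y := le_self_add
        have heq2 := IH _ hlt2 m (k - m) 0 r hb hr rfl
        rw [zero_nadd] at heq2
        have hmk : m + (k - m) = k := by omega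
        rw [hmk] at heq2
        exact lt_irrefl _ (heq.trans_lt (heq2.symm.trans_lt hlt2))
    · rcases lt_nadd_iff.1 h with ⟨x', hx', hle⟩ | ⟨y', hy', hle⟩
      · have hlt2 : (ω ^ e * m + x') ♯ (ω ^ e * n + y) < (ω ^ e * m + x) ♯ (ω ^ e * n + y) :=
          nadd_lt_nadd_right (add_lt_add_right hx' _) _
        have heq2 := IH _ hlt2 m n x' y (hx'.trans hx) hy rfl
        have hle2 : (ω ^ e * m + x) ♯ (ω ^ e * n + y) ≤ (ω ^ e * m + x') ♯ (ω ^ e * n + y) := by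
          rw [heq2, heq]
          exact add_le_add_right hle _
        exact lt_irrefl _ (hlt2.trans_le hle2)
      · have hlt2 : (ω ^ e * m + x) ♯ (ω ^ e * n + y') < (ω ^ e * m + x) ♯ (ω ^ e * n + y) :=
          nadd_lt_nadd_left (add_lt_add_right hy' _) _
        have heq2 := IH _ hlt2 m n x y' hx (hy'.trans hy) rfl
        have hle2 : (ω ^ e * m + x) ♯ (ω ^ e * n + y) ≤ (ω ^ e * m + x) ♯ (ω ^ e * n + y') := by
          rw [heq2, heq]
          exact add_le_add_right hle _
        exact lt_irrefl _ (hlt2.trans_le hle2)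



theorem cnf_succ (d : ℕ) (a : ℕ → ℕ) :
    cnf (d+1) a = ω^(d+1) * (a (d+1) : Ordinal) + cnf d a := by
  unfold cnf
  rw [List.range_succ, List.reverse_append]
  simp

theorem cnf_zero (a : ℕ → ℕ) : cnf 0 a = a 0 := by simp [cnf, List.range_succ]

theorem npow_eq (i : ℕ) : (ω : Ordinal) ^ i = ω ^ (i : Ordinal) := (opow_natCast ω i).symm

theorem succ_cast_mul' (c : Ordinal) (k : ℕ) :
    c * (k : Ordinal) + c = c * ((k + 1 : ℕ) : Ordinal) := by
  push_cast
  rw [mul_add, mul_one]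

-- decompose u < ω^e * ω
theorem decomp' (e u : Ordinal) (hu : u < ω ^ e * ω) :
    ∃ (k : ℕ) (r : Ordinal), r < ω ^ e ∧ u = ω ^ e * k + r := by
  have hb : (0:Ordinal) < ω ^ e := opow_pos _ omega0_pos
  have hk : u / ω ^ e < ω := (Ordinal.div_lt hb.ne').2 hu
  obtain ⟨k, hkeq⟩ := lt_omega0.1 hk
  exact ⟨k, u % ω ^ e, Ordinal.mod_lt u hb.ne',
    by rw [← hkeq]; exact (Ordinal.div_add_mod u _).symm⟩

theorem cnf_lt (d : ℕ) (a : ℕ → ℕ) : cnf d a < ω ^ (d+1) := by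
  induction d with
  | zero => rw [cnf_zero, pow_one]; exact nat_lt_omega0 _
  | succ d IH =>
    rw [cnf_succ]
    calc ω^(d+1) * (a (d+1) : Ordinal) + cnf d a
        < ω^(d+1) * (a (d+1) : Ordinal) + ω^(d+1) := add_lt_add_right IH _
      _ = ω^(d+1) * ((a (d+1) + 1 : ℕ) : Ordinal) := succ_cast_mul' _ _
      _ < ω^(d+1) * ω := by
          rw [npow_eq]
          exact mul_lt_mul_of_pos_left (nat_lt_omega0 _) (opow_pos _ omega0_pos)
      _ = ω^(d+1+1) := (pow_succ ω (d+1)).symm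

theorem myclosure : ∀ (i : ℕ) (x y : Ordinal),
    x < ω ^ (i : Ordinal) → y < ω ^ (i : Ordinal) → x ♯ y < ω ^ (i : Ordinal) := by
  intro i
  induction i with
  | zero =>
    intro x y hx hy
    rw [Nat.cast_zero, opow_zero, Ordinal.lt_one_iff_zero] at *
    rw [hx, hy, nadd_zero]
  | succ i IH =>
    intro x y hx hy
    have hcast : ((i+1 : ℕ) : Ordinal) = (i : Ordinal) + 1 := by push_cast; rfl
    have hsucc : ω ^ ((i+1 : ℕ) : Ordinal) = ω ^ (i : Ordinal) * ω := by
      rw [hcast, opow_add, opow_one]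
    rw [hsucc] at hx hy ⊢
    obtain ⟨k1, r1, hr1, rfl⟩ := decomp' _ _ hx
    obtain ⟨k2, r2, hr2, rfl⟩ := decomp' _ _ hy
    rw [key _ IH _ k1 k2 r1 r2 hr1 hr2 rfl]
    calc ω ^ (i:Ordinal) * ((k1 + k2 : ℕ) : Ordinal) + (r1 ♯ r2)
        < ω ^ (i:Ordinal) * ((k1 + k2 : ℕ) : Ordinal) + ω ^ (i:Ordinal) :=
          add_lt_add_right (IH _ _ hr1 hr2) _
      _ = ω ^ (i:Ordinal) * ((k1 + k2 + 1 : ℕ) : Ordinal) := succ_cast_mul' _ _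
      _ < ω ^ (i:Ordinal) * ω :=
          mul_lt_mul_of_pos_left (nat_lt_omega0 _) (opow_pos _ omega0_pos)

theorem cnf_nadd (d : ℕ) (a b : ℕ → ℕ) :
    cnf d a ♯ cnf d b = cnf d (fun i => a i + b i) := by
  induction d with
  | zero => rw [cnf_zero, cnf_zero, cnf_zero, nadd_nat, Nat.cast_add]
  | succ d IH =>
    rw [cnf_succ, cnf_succ, cnf_succ]
    have h1 : cnf d a < ω ^ ((d+1 : ℕ) : Ordinal) := by rw [← npow_eq]; exact cnf_lt d a
    have h2 : cnf d b < ω ^ ((d+1 : ℕ) : Ordinal) := by rw [← npow_eq]; exact cnf_lt d b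
    rw [npow_eq (d+1)]
    rw [key _ (myclosure (d+1)) _ (a (d+1)) (b (d+1)) _ _ h1 h2 rfl, IH]

theorem cnf_congr {d : ℕ} {a b : ℕ → ℕ} (h : ∀ i ≤ d, a i = b i) : cnf d a = cnf d b := by
  unfold cnf
  congr 1
  apply List.map_congr_left
  intro i hi
  rw [List.mem_reverse, List.mem_range] at hi
  rw [h i (by omega)]

theorem cnf_pad (d k : ℕ) (a : ℕ → ℕ) :
    cnf d (fun i => if i ≤ d then a i else 0) = cnf (d + k) (fun i => if i ≤ d then a i else 0) := by
  induction k with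
  | zero => rfl
  | succ k IH =>
    rw [show d + (k+1) = (d+k)+1 from rfl, cnf_succ]
    rw [if_neg (by omega : ¬ d + k + 1 ≤ d)]
    simp only [Nat.cast_zero, mul_zero, zero_add]
    exact IH

theorem cnf_repr : ∀ (d : ℕ) (α : Ordinal), α < ω ^ (d+1) → ∃ a, α = cnf d a := by
  intro d
  induction d with
  | zero =>
    intro α hα
    rw [pow_one] at hα
    obtain ⟨n, rfl⟩ := lt_omega0.1 hα
    exact ⟨fun _ => n, (cnf_zero (fun _ => n)).symm⟩
  | succ d IH =>
    intro α hα
    rw [pow_succ, npow_eq] at hα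
    obtain ⟨m, r, hr, rfl⟩ := decomp' _ _ hα
    rw [← npow_eq] at hr
    obtain ⟨a, rfl⟩ := IH r hr
    refine ⟨fun i => if i = d+1 then m else a i, ?_⟩
    rw [cnf_succ, if_pos rfl, npow_eq]
    congr 1
    exact cnf_congr fun i hi => (if_neg (by omega)).symm


theorem pad_to {d D : ℕ} {α : Ordinal} {a : ℕ → ℕ} (hD : d ≤ D) (ha : α = cnf d a) :
    α = cnf D (fun i => if i ≤ d then a i else 0) := by
  have h1 : cnf d a = cnf d (fun i => if i ≤ d then a i else 0) :=
    cnf_congr fun i hi => (if_pos hi).symm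
  have h2 := cnf_pad d (D - d) a
  rw [show d + (D - d) = D from by omega] at h2
  rw [ha, h1, h2]

/-- For ordinals below `ω^ω`, `α` is weaker than `β` (coefficient-wise comparison of the
Cantor normal forms) if and only if `β` is a natural sum of `α` and some ordinal. -/
theorem weaker_iff_exists_nadd (α β : Ordinal) (hα : α < ω ^ ω) (hβ : β < ω ^ ω) :
    Weaker α β ↔ ∃ γ : Ordinal, α ♯ γ = β := by
  constructor
  · rintro ⟨d, a, b, rfl, rfl, hab⟩
    refine ⟨cnf d (fun i => b i - a i), ?_⟩
    rw [cnf_nadd]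
    exact congrArg (cnf d) (funext fun i => by have := hab i; omega)
  · rintro ⟨γ, rfl⟩
    have hγ : γ < ω ^ (ω : Ordinal) := lt_of_le_of_lt le_nadd_self hβ
    have hdeg : ∀ δ : Ordinal, δ < ω ^ (ω : Ordinal) → ∃ d : ℕ, δ < ω ^ (d + 1) := by
      intro δ hδ
      obtain ⟨c, hc, hdc⟩ := (lt_opow_of_isSuccLimit omega0_ne_zero isSuccLimit_omega0).1 hδ
      obtain ⟨n, rfl⟩ := lt_omega0.1 hc
      have h1 : δ < ω ^ n := by rw [npow_eq]; exact hdc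
      have h2 : (ω : Ordinal) ^ n ≤ ω ^ (n + 1) := by
        rw [npow_eq, npow_eq]
        exact opow_le_opow_right omega0_pos (by exact_mod_cast Nat.le_succ n)
      exact ⟨n, h1.trans_le h2⟩
    obtain ⟨d₁, hd₁⟩ := hdeg α hα
    obtain ⟨d₂, hd₂⟩ := hdeg γ hγ
    obtain ⟨a, ha⟩ := cnf_repr d₁ α hd₁
    obtain ⟨c, hc⟩ := cnf_repr d₂ γ hd₂
    have ha' := pad_to (le_max_left d₁ d₂) ha
    have hc' := pad_to (le_max_right d₁ d₂) hc
    refine ⟨max d₁ d₂, (fun i => if i ≤ d₁ then a i else 0),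
      (fun i => (if i ≤ d₁ then a i else 0) + (if i ≤ d₂ then c i else 0)), ha', ?_,
      fun i => Nat.le_add_right _ _⟩
    rw [ha', hc', cnf_nadd]
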